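/- Let G be a connected complete bipartite graph. Then E(i)·E(j) = 1 for every edge (i,j) of G, where E(i) is the vertex energy. -/

import Mathlib

open Finset Matrix

noncomputable section

variable {V : Type*} [Fintype V] [DecidableEq V]

/-- The adjacency matrix of a simple graph is Hermitian (over ℝ). -/
theorem SimpleGraph.isHermitian_adjMatrix' (G : SimpleGraph V) [DecidableRel G.Adj] :
    (G.adjMatrix ℝ).IsHermitian := by
  rw [Matrix.IsHermitian, Matrix.conjTranspose_eq_transpose_of_trivial]
  exact G.isSymm_adjMatrix

/-- The energy of a graph: the sum of the absolute values of the
eigenvalues of its adjacency matrix. -/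
def SimpleGraph.energy (G : SimpleGraph V) [DecidableRel G.Adj] : ℝ :=
  ∑ k, |G.isHermitian_adjMatrix'.eigenvalues k|

/-- The Randić index of a graph: the sum over the (unordered) edges `(i,j)`
of `1/√(deg i · deg j)`. -/
def SimpleGraph.randic (G : SimpleGraph V) [DecidableRel G.Adj] : ℝ :=
  ∑ e ∈ G.edgeFinset,
    Sym2.lift ⟨fun i j => 1 / Real.sqrt (G.degree i * G.degree j),
      fun i j => by simp [mul_comm]⟩ e

end
instance {n m : ℕ} : DecidableRel (completeBipartiteGraph (Fin n) (Fin m)).Adj :=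
  fun a b => by unfold completeBipartiteGraph; dsimp only; infer_instance

noncomputable section
namespace Stmt19Aux

variable {n m : ℕ}

def C (n m : ℕ) : Matrix (Fin n ⊕ Fin m) (Fin n ⊕ Fin m) ℝ :=
  fun i j => match i, j with
  | Sum.inl _, Sum.inl _ => Real.sqrt m / Real.sqrt n
  | Sum.inr _, Sum.inr _ => Real.sqrt n / Real.sqrt m
  | _, _ => 0

def D (n m : ℕ) : Matrix (Fin 2) (Fin n ⊕ Fin m) ℝ :=
  fun k j => match k, j with
  | 0, Sum.inl _ => Real.sqrt (Real.sqrt m / Real.sqrt n)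
  | 1, Sum.inr _ => Real.sqrt (Real.sqrt n / Real.sqrt m)
  | _, _ => 0

lemma C_eq : C n m = (D n m)ᴴ * (D n m) := by
  ext i j
  rcases i with a | a <;> rcases j with b | b <;>
      simp [C, D, Matrix.mul_apply, Fin.sum_univ_two] <;>
    rw [div_mul_div_comm, Real.mul_self_sqrt (Real.sqrt_nonneg _),
      Real.mul_self_sqrt (Real.sqrt_nonneg _)]

lemma C_psd : (C n m).PosSemidef := C_eq ▸ posSemidef_conjTranspose_mul_self _

lemma C_sq (hn : 1 ≤ n) (hm : 1 ≤ m) :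
    C n m * C n m = (completeBipartiteGraph (Fin n) (Fin m)).adjMatrix ℝ *
      (completeBipartiteGraph (Fin n) (Fin m)).adjMatrix ℝ := by
  have hn0 : (0:ℝ) < n := by exact_mod_cast hn
  have hm0 : (0:ℝ) < m := by exact_mod_cast hm
  ext i j
  rcases i with a | a <;> rcases j with b | b <;>
      simp [C, Matrix.mul_apply, SimpleGraph.adjMatrix_apply, completeBipartiteGraph_adj, Fintype.sum_sum_type] <;>
    rw [div_mul_div_comm, Real.mul_self_sqrt hn0.le, Real.mul_self_sqrt hm0.le] <;>
    field_simp

open scoped MatrixOrder in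
lemma psd_eq_of_sq_eq_sq {ι : Type*} [Fintype ι] [DecidableEq ι] {A B : Matrix ι ι ℝ}
    (hA : A.PosSemidef) (hB : B.PosSemidef) (h : A ^ 2 = B ^ 2) : A = B :=
  (CFC.sq_eq_sq_iff A B hA.nonneg hB.nonneg).mp h

end Stmt19Aux
end

/-- For the (connected) complete bipartite graph `K_{n,m}` (`n, m ≥ 1`), the vertex
energies `E(i) = B i i` — with `B` the positive semidefinite square root of the square
of the adjacency matrix — satisfy `E(i)·E(j) = 1` for every edge `(i,j)`. -/
theorem stmt19 {n m : ℕ} (hn : 1 ≤ n) (hm : 1 ≤ m)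
    (B : Matrix (Fin n ⊕ Fin m) (Fin n ⊕ Fin m) ℝ) (hB : B.PosSemidef)
    (hB2 : B * B = (completeBipartiteGraph (Fin n) (Fin m)).adjMatrix ℝ *
      (completeBipartiteGraph (Fin n) (Fin m)).adjMatrix ℝ)
    {i j : Fin n ⊕ Fin m} (hij : (completeBipartiteGraph (Fin n) (Fin m)).Adj i j) :
    B i i * B j j = 1 := by
  have hn0 : (0:ℝ) < n := by exact_mod_cast hn
  have hm0 : (0:ℝ) < m := by exact_mod_cast hm
  have hBC : B = Stmt19Aux.C n m := by
    apply Stmt19Aux.psd_eq_of_sq_eq_sq hB Stmt19Aux.C_psd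
    rw [pow_two, pow_two, hB2, Stmt19Aux.C_sq hn hm]
  subst hBC
  rcases i with a | a <;> rcases j with b | b <;>
      simp [completeBipartiteGraph] at hij <;>
    · simp only [Stmt19Aux.C]
      rw [div_mul_div_comm, mul_comm (Real.sqrt _)]
      rw [div_self (by positivity)]
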